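/- Let N ≥ 2 and T_L, T_R > 0 be fixed, and for λ > 0 let T_i^{(λ)} = λ(T_R−T_L)/(λ(N−1)+2)·i + (T_L + T_R + λ(N·T_L − T_R))/(λ(N−1)+2), and ψ_λ(ξ) = T_L^{ξ_0}·T_R^{ξ_{N+1}}·∏_{i=1}^N (T_i^{(λ)})^{ξ_i} for ξ : {0,…,N+1} → ℕ. Then there exists λ₀ > 0 such that for every ξ there is a constant A(ξ) > 0 with |(L_d ψ_λ)(ξ)| ≤ A(ξ)·λ² for all 0 < λ ≤ λ₀; consequently, for every K ∈ ℕ there is C(K) > 0 with sup over all ξ with Σ_{i=0}^{N+1} ξ_i = K of |(L_d ψ_λ)(ξ)| ≤ C(K)·λ² for all 0 < λ ≤ λ₀. -/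

import Mathlib

/-- `ξ^{i,j}`: the configuration obtained from `ξ` by removing one particle from
site `i` and adding one at site `j`. -/
def moveParticle (ξ : ℕ → ℕ) (i j : ℕ) : ℕ → ℕ :=
  fun k => if k = i then ξ i - 1 else if k = j then ξ j + 1 else ξ k

/-- The temperature profile `T_i^{(λ)} = a·i + b` of the Brownian momentum process. -/
noncomputable def tempProfile (N : ℕ) (lam TL TR : ℝ) (i : ℕ) : ℝ :=
  lam * (TR - TL) / (lam * ((N : ℝ) - 1) + 2) * i +
    (TL + TR + lam * ((N : ℝ) * TL - TR)) / (lam * ((N : ℝ) - 1) + 2)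

/-- `ψ_λ(ξ) = T_L^{ξ_0}·T_R^{ξ_{N+1}}·∏_{i=1}^N (T_i^{(λ)})^{ξ_i}`. -/
noncomputable def psiLam (N : ℕ) (lam TL TR : ℝ) (ξ : ℕ → ℕ) : ℝ :=
  TL ^ ξ 0 * TR ^ ξ (N + 1) * ∏ i ∈ Finset.Icc 1 N, tempProfile N lam TL TR i ^ ξ i

/-- The dual generator `L_d` of the symmetric inclusion process `SIP_λ` applied to `f`. -/
noncomputable def dualGen (N : ℕ) (lam : ℝ) (f : (ℕ → ℕ) → ℝ) (ξ : ℕ → ℕ) : ℝ :=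
  2 * lam * (ξ 1 : ℝ) * (f (moveParticle ξ 1 0) - f ξ) +
    (∑ i ∈ Finset.Icc 1 (N - 1),
      (2 * (ξ (i + 1) : ℝ) * (2 * (ξ i : ℝ) + 1) * (f (moveParticle ξ (i + 1) i) - f ξ) +
        2 * (ξ i : ℝ) * (2 * (ξ (i + 1) : ℝ) + 1) * (f (moveParticle ξ i (i + 1)) - f ξ))) +
    2 * lam * (ξ N : ℝ) * (f (moveParticle ξ N (N + 1)) - f ξ)

lemma tempProfile_mul_den (N : ℕ) (lam TL TR : ℝ)
    (hD : lam * ((N : ℝ) - 1) + 2 ≠ 0) (i : ℕ) :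
    tempProfile N lam TL TR i * (lam * ((N : ℝ) - 1) + 2)
      = lam * ((TR - TL) * i + (N : ℝ) * TL - TR) + TL + TR := by
  rw [tempProfile]; field_simp; ring

-- L4: successive difference

lemma tempProfile_succ_sub (N : ℕ) (lam TL TR : ℝ) (i : ℕ) :
    tempProfile N lam TL TR (i + 1) - tempProfile N lam TL TR i
      = lam * (TR - TL) / (lam * ((N : ℝ) - 1) + 2) := by
  rw [tempProfile, tempProfile]; push_cast; ring

-- L5 boundary identities

lemma temp_one (N : ℕ) (lam TL TR : ℝ) (hD : lam * ((N : ℝ) - 1) + 2 ≠ 0) :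
    (TL - tempProfile N lam TL TR 1) * (lam * ((N : ℝ) - 1) + 2) = TL - TR := by
  rw [tempProfile]; push_cast; field_simp; ring

lemma temp_last (N : ℕ) (lam TL TR : ℝ) (hD : lam * ((N : ℝ) - 1) + 2 ≠ 0) :
    (TR - tempProfile N lam TL TR N) * (lam * ((N : ℝ) - 1) + 2) = TR - TL := by
  rw [tempProfile]; field_simp; ring

-- L6 per-bond scalar identity

lemma bond_identity (x y : ℝ) (hx : x ≠ 0) (hy : y ≠ 0) (m n : ℕ) :
    2 * (n : ℝ) * (2 * m + 1) * (x / y - 1) + 2 * (m : ℝ) * (2 * n + 1) * (y / x - 1)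
      = 4 * m * n * (y - x) ^ 2 / (x * y) + 2 * (y - x) * ((m : ℝ) / x - (n : ℝ) / y) := by
  field_simp; ring

lemma den_bounds (N : ℕ) (hN : 2 ≤ N) (lam : ℝ) (h0 : 0 < lam) (h1 : lam ≤ 1) :
    2 ≤ lam * ((N : ℝ) - 1) + 2 ∧ lam * ((N : ℝ) - 1) + 2 ≤ (N : ℝ) + 1 := by
  have hN1 : (1 : ℝ) ≤ (N : ℝ) - 1 := by
    have : (2 : ℝ) ≤ (N : ℝ) := by exact_mod_cast hN
    linarith
  constructor
  · nlinarith
  · nlinarith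

lemma temp_bounds (N : ℕ) (hN : 2 ≤ N) (TL TR : ℝ) (hTL : 0 < TL) (hTR : 0 < TR)
    (lam : ℝ) (h0 : 0 < lam) (h1 : lam ≤ 1) (h2 : lam * (4 * N) ≤ 1)
    (i : ℕ) (hi1 : 1 ≤ i) (hiN : i ≤ N) :
    (TL + TR) / (2 * ((N : ℝ) + 1)) ≤ tempProfile N lam TL TR i ∧
      tempProfile N lam TL TR i ≤ TL + TR := by
  set D : ℝ := lam * ((N : ℝ) - 1) + 2 with hDdef
  obtain ⟨hD2, hDN⟩ := den_bounds N hN lam h0 h1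
  have hDpos : (0:ℝ) < D := by linarith
  have hkey := tempProfile_mul_den N lam TL TR (by linarith) i
  have hiR : (1:ℝ) ≤ (i:ℝ) := by exact_mod_cast hi1
  have hiNR : (i:ℝ) ≤ (N:ℝ) := by exact_mod_cast hiN
  have hNpos : (0:ℝ) < (N:ℝ) := by positivity
  -- numerator bounds
  have habs : |(TR - TL) * i + (N : ℝ) * TL - TR| ≤ 2 * N * (TL + TR) := by
    rw [abs_le]; constructor <;> nlinarith
  have hnum_lo : (TL + TR) / 2 ≤ lam * ((TR - TL) * i + (N : ℝ) * TL - TR) + TL + TR := by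
    have h3 : lam * |(TR - TL) * i + (N : ℝ) * TL - TR| ≤ lam * (2 * N * (TL + TR)) :=
      mul_le_mul_of_nonneg_left habs h0.le
    have h4 : lam * (2 * N * (TL + TR)) ≤ (TL + TR) / 2 := by nlinarith
    have h5 := neg_abs_le ((TR - TL) * i + (N : ℝ) * TL - TR)
    nlinarith [abs_nonneg ((TR - TL) * i + (N : ℝ) * TL - TR)]
  have hnum_hi : lam * ((TR - TL) * i + (N : ℝ) * TL - TR) + TL + TR ≤ 3 * (TL + TR) / 2 := by
    have h3 : lam * ((TR - TL) * i + (N : ℝ) * TL - TR) ≤ lam * |(TR - TL) * i + (N : ℝ) * TL - TR| :=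
      mul_le_mul_of_nonneg_left (le_abs_self _) h0.le
    nlinarith
  constructor
  · rw [div_le_iff₀ (by linarith)]
    nlinarith [mul_le_mul_of_nonneg_left hDN (show (0:ℝ) ≤ (TL+TR)/2 by positivity)]
  · nlinarith

lemma prod_move_both (T : ℕ → ℝ) (s : Finset ℕ) (ξ : ℕ → ℕ) (i j : ℕ)
    (hi : i ∈ s) (hj : j ∈ s) (hij : i ≠ j) (hξ : 1 ≤ ξ i) :
    (∏ k ∈ s, T k ^ (moveParticle ξ i j k)) * T i = (∏ k ∈ s, T k ^ ξ k) * T j := by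
  have hfun : (fun k => T k ^ (moveParticle ξ i j k))
      = Function.update (Function.update (fun k => T k ^ ξ k) j (T j ^ (ξ j + 1))) i
          (T i ^ (ξ i - 1)) := by
    funext k
    by_cases hki : k = i
    · subst hki; simp [moveParticle, Function.update]
    · by_cases hkj : k = j
      · subst hkj; simp [moveParticle, Function.update, hki, hij.symm]
      · simp [moveParticle, Function.update, hki, hkj]
  rw [hfun, Finset.prod_update_of_mem hi]
  have hj' : j ∈ s \ {i} := Finset.mem_sdiff.2 ⟨hj, by simp [hij.symm]⟩
  rw [Finset.prod_update_of_mem hj']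
  rw [← Finset.mul_prod_erase s _ hi, ← Finset.mul_prod_erase (s.erase i) _
    (Finset.mem_erase.2 ⟨fun h => hij h.symm, hj⟩)]
  have hsd : (s \ {i}) \ {j} = (s.erase i).erase j := by
    rw [Finset.sdiff_singleton_eq_erase, Finset.sdiff_singleton_eq_erase]
  rw [hsd]
  have h1 : T i ^ (ξ i - 1) * T i = T i ^ ξ i := by
    rw [← pow_succ]; congr 1; omega
  have h2 : T j ^ (ξ j + 1) = T j ^ ξ j * T j := pow_succ _ _
  rw [h2]
  calc T i ^ (ξ i - 1) * (T j ^ ξ j * T j * ∏ k ∈ (s.erase i).erase j, T k ^ ξ k) * T i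
      = (T i ^ (ξ i - 1) * T i) * (T j ^ ξ j * ∏ k ∈ (s.erase i).erase j, T k ^ ξ k) * T j := by
        ring
    _ = _ := by rw [h1]

lemma prod_move_out (T : ℕ → ℝ) (s : Finset ℕ) (ξ : ℕ → ℕ) (i j : ℕ)
    (hi : i ∈ s) (hj : j ∉ s) (hij : i ≠ j) (hξ : 1 ≤ ξ i) :
    (∏ k ∈ s, T k ^ (moveParticle ξ i j k)) * T i = ∏ k ∈ s, T k ^ ξ k := by
  have hcong : ∀ k ∈ s, T k ^ (moveParticle ξ i j k)
      = Function.update (fun k => T k ^ ξ k) i (T i ^ (ξ i - 1)) k := by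
    intro k hk
    by_cases hki : k = i
    · subst hki; simp [moveParticle, Function.update]
    · have hkj : k ≠ j := fun h => hj (h ▸ hk)
      simp [moveParticle, Function.update, hki, hkj]
  rw [Finset.prod_congr rfl hcong, Finset.prod_update_of_mem hi,
    ← Finset.mul_prod_erase s _ hi, Finset.sdiff_singleton_eq_erase]
  have h1 : T i ^ (ξ i - 1) * T i = T i ^ ξ i := by
    rw [← pow_succ]; congr 1; omega
  rw [mul_right_comm, h1]

lemma psi_move_bulk (N : ℕ) (lam TL TR : ℝ) (ξ : ℕ → ℕ) (i j : ℕ)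
    (hi : i ∈ Finset.Icc 1 N) (hj : j ∈ Finset.Icc 1 N) (hij : i ≠ j) (hξ : 1 ≤ ξ i) :
    psiLam N lam TL TR (moveParticle ξ i j) * tempProfile N lam TL TR i
      = psiLam N lam TL TR ξ * tempProfile N lam TL TR j := by
  simp only [Finset.mem_Icc] at hi hj
  have h0 : moveParticle ξ i j 0 = ξ 0 := by
    simp only [moveParticle]; rw [if_neg (by omega), if_neg (by omega)]
  have h1 : moveParticle ξ i j (N + 1) = ξ (N + 1) := by
    simp only [moveParticle]; rw [if_neg (by omega), if_neg (by omega)]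
  rw [psiLam, psiLam, h0, h1]
  have := prod_move_both (tempProfile N lam TL TR) (Finset.Icc 1 N) ξ i j
    (Finset.mem_Icc.2 hi) (Finset.mem_Icc.2 hj) hij hξ
  calc TL ^ ξ 0 * TR ^ ξ (N + 1) * (∏ k ∈ Finset.Icc 1 N,
        tempProfile N lam TL TR k ^ moveParticle ξ i j k) * tempProfile N lam TL TR i
      = TL ^ ξ 0 * TR ^ ξ (N + 1) * ((∏ k ∈ Finset.Icc 1 N,
        tempProfile N lam TL TR k ^ moveParticle ξ i j k) * tempProfile N lam TL TR i) := by ring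
    _ = TL ^ ξ 0 * TR ^ ξ (N + 1) * ((∏ k ∈ Finset.Icc 1 N,
        tempProfile N lam TL TR k ^ ξ k) * tempProfile N lam TL TR j) := by rw [this]
    _ = _ := by ring

lemma psi_move_left (N : ℕ) (lam TL TR : ℝ) (hN : 1 ≤ N) (ξ : ℕ → ℕ) (hξ : 1 ≤ ξ 1) :
    psiLam N lam TL TR (moveParticle ξ 1 0) * tempProfile N lam TL TR 1
      = psiLam N lam TL TR ξ * TL := by
  have h0 : moveParticle ξ 1 0 0 = ξ 0 + 1 := by simp [moveParticle]
  have h1 : moveParticle ξ 1 0 (N + 1) = ξ (N + 1) := by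
    simp only [moveParticle]; rw [if_neg (by omega), if_neg (by omega)]
  rw [psiLam, psiLam, h0, h1]
  have := prod_move_out (tempProfile N lam TL TR) (Finset.Icc 1 N) ξ 1 0
    (Finset.mem_Icc.2 ⟨le_refl 1, hN⟩) (by simp) (by omega) hξ
  rw [pow_succ]
  calc TL ^ ξ 0 * TL * TR ^ ξ (N + 1) * (∏ k ∈ Finset.Icc 1 N,
        tempProfile N lam TL TR k ^ moveParticle ξ 1 0 k) * tempProfile N lam TL TR 1
      = TL ^ ξ 0 * TL * TR ^ ξ (N + 1) * ((∏ k ∈ Finset.Icc 1 N,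
        tempProfile N lam TL TR k ^ moveParticle ξ 1 0 k) * tempProfile N lam TL TR 1) := by ring
    _ = TL ^ ξ 0 * TL * TR ^ ξ (N + 1) * (∏ k ∈ Finset.Icc 1 N,
        tempProfile N lam TL TR k ^ ξ k) := by rw [this]
    _ = _ := by ring

lemma psi_move_right (N : ℕ) (lam TL TR : ℝ) (hN : 1 ≤ N) (ξ : ℕ → ℕ) (hξ : 1 ≤ ξ N) :
    psiLam N lam TL TR (moveParticle ξ N (N + 1)) * tempProfile N lam TL TR N
      = psiLam N lam TL TR ξ * TR := by
  have h0 : moveParticle ξ N (N + 1) 0 = ξ 0 := by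
    simp only [moveParticle]; rw [if_neg (by omega), if_neg (by omega)]
  have h1 : moveParticle ξ N (N + 1) (N + 1) = ξ (N + 1) + 1 := by
    simp only [moveParticle, if_neg (show N + 1 ≠ N by omega)]; simp
  rw [psiLam, psiLam, h0, h1]
  have := prod_move_out (tempProfile N lam TL TR) (Finset.Icc 1 N) ξ N (N + 1)
    (Finset.mem_Icc.2 ⟨hN, le_refl N⟩) (by simp) (by omega) hξ
  rw [pow_succ]
  calc TL ^ ξ 0 * (TR ^ ξ (N + 1) * TR) * (∏ k ∈ Finset.Icc 1 N,
        tempProfile N lam TL TR k ^ moveParticle ξ N (N + 1) k) * tempProfile N lam TL TR N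
      = TL ^ ξ 0 * (TR ^ ξ (N + 1) * TR) * ((∏ k ∈ Finset.Icc 1 N,
        tempProfile N lam TL TR k ^ moveParticle ξ N (N + 1) k) * tempProfile N lam TL TR N) := by
        ring
    _ = TL ^ ξ 0 * (TR ^ ξ (N + 1) * TR) * (∏ k ∈ Finset.Icc 1 N,
        tempProfile N lam TL TR k ^ ξ k) := by rw [this]
    _ = _ := by ring

lemma dualGen_identity (N : ℕ) (hN : 2 ≤ N) (TL TR : ℝ) (lam : ℝ)
    (hD : lam * ((N : ℝ) - 1) + 2 ≠ 0)
    (hT : ∀ i, 1 ≤ i → i ≤ N → tempProfile N lam TL TR i ≠ 0) (ξ : ℕ → ℕ) :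
    dualGen N lam (psiLam N lam TL TR) ξ
      = psiLam N lam TL TR ξ *
          ∑ i ∈ Finset.Icc 1 (N - 1),
            4 * (ξ i : ℝ) * (ξ (i + 1) : ℝ) *
              (lam * (TR - TL) / (lam * ((N : ℝ) - 1) + 2)) ^ 2 /
                (tempProfile N lam TL TR i * tempProfile N lam TL TR (i + 1)) := by
  set T : ℕ → ℝ := tempProfile N lam TL TR with hTdef
  set ψ : ℝ := psiLam N lam TL TR ξ with hψdef
  set a : ℝ := lam * (TR - TL) / (lam * ((N : ℝ) - 1) + 2) with hadef
  have hT1 : T 1 ≠ 0 := hT 1 le_rfl (by omega)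
  have hTN : T N ≠ 0 := hT N (by omega) le_rfl
  -- boundary piece rewrites
  have hpiece0 : 2 * lam * (ξ 1 : ℝ) * (psiLam N lam TL TR (moveParticle ξ 1 0) - ψ)
      = ψ * (2 * lam * (ξ 1 : ℝ) * ((TL - T 1) / T 1)) := by
    rcases Nat.eq_zero_or_pos (ξ 1) with h | h
    · simp [h]
    · have hm : psiLam N lam TL TR (moveParticle ξ 1 0) = ψ * TL / T 1 := by
        rw [eq_div_iff hT1]; exact psi_move_left N lam TL TR (by omega) ξ h
      rw [hm]; field_simp
  have hpieceN : 2 * lam * (ξ N : ℝ) * (psiLam N lam TL TR (moveParticle ξ N (N + 1)) - ψ)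
      = ψ * (2 * lam * (ξ N : ℝ) * ((TR - T N) / T N)) := by
    rcases Nat.eq_zero_or_pos (ξ N) with h | h
    · simp [h]
    · have hm : psiLam N lam TL TR (moveParticle ξ N (N + 1)) = ψ * TR / T N := by
        rw [eq_div_iff hTN]; exact psi_move_right N lam TL TR (by omega) ξ h
      rw [hm]; field_simp
  -- bulk summand rewrite
  have hsummand : ∀ i ∈ Finset.Icc 1 (N - 1),
      (2 * (ξ (i + 1) : ℝ) * (2 * (ξ i : ℝ) + 1) *
          (psiLam N lam TL TR (moveParticle ξ (i + 1) i) - ψ) +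
        2 * (ξ i : ℝ) * (2 * (ξ (i + 1) : ℝ) + 1) *
          (psiLam N lam TL TR (moveParticle ξ i (i + 1)) - ψ))
      = ψ * (4 * (ξ i : ℝ) * (ξ (i + 1) : ℝ) * a ^ 2 / (T i * T (i + 1))
          + 2 * a * ((ξ i : ℝ) / T i - (ξ (i + 1) : ℝ) / T (i + 1))) := by
    intro i hi
    rw [Finset.mem_Icc] at hi
    have hi1 : i ∈ Finset.Icc 1 N := Finset.mem_Icc.2 ⟨hi.1, by omega⟩
    have hi2 : i + 1 ∈ Finset.Icc 1 N := Finset.mem_Icc.2 ⟨by omega, by omega⟩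
    have hTi : T i ≠ 0 := hT i hi.1 (by omega)
    have hTi1 : T (i + 1) ≠ 0 := hT (i + 1) (by omega) (by omega)
    have hA : 2 * (ξ (i + 1) : ℝ) * (2 * (ξ i : ℝ) + 1) *
        (psiLam N lam TL TR (moveParticle ξ (i + 1) i) - ψ)
        = ψ * (2 * (ξ (i + 1) : ℝ) * (2 * (ξ i : ℝ) + 1) * (T i / T (i + 1) - 1)) := by
      rcases Nat.eq_zero_or_pos (ξ (i + 1)) with h | h
      · simp [h]
      · have hm : psiLam N lam TL TR (moveParticle ξ (i + 1) i) = ψ * T i / T (i + 1) := by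
          rw [eq_div_iff hTi1]; exact psi_move_bulk N lam TL TR ξ (i + 1) i hi2 hi1 (by omega) h
        rw [hm]; field_simp
    have hB : 2 * (ξ i : ℝ) * (2 * (ξ (i + 1) : ℝ) + 1) *
        (psiLam N lam TL TR (moveParticle ξ i (i + 1)) - ψ)
        = ψ * (2 * (ξ i : ℝ) * (2 * (ξ (i + 1) : ℝ) + 1) * (T (i + 1) / T i - 1)) := by
      rcases Nat.eq_zero_or_pos (ξ i) with h | h
      · simp [h]
      · have hm : psiLam N lam TL TR (moveParticle ξ i (i + 1)) = ψ * T (i + 1) / T i := by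
          rw [eq_div_iff hTi]; exact psi_move_bulk N lam TL TR ξ i (i + 1) hi1 hi2 (by omega) h
        rw [hm]; field_simp
    rw [hA, hB, ← mul_add, bond_identity (T i) (T (i + 1)) hTi hTi1 (ξ i) (ξ (i + 1)),
      show T (i + 1) - T i = a from tempProfile_succ_sub N lam TL TR i]
  -- assemble
  rw [dualGen, hpiece0, hpieceN, Finset.sum_congr rfl hsummand]
  simp only [mul_add, Finset.sum_add_distrib, ← Finset.mul_sum]
  -- telescoping
  have htel : ∑ i ∈ Finset.Icc 1 (N - 1),
      ((ξ i : ℝ) / T i - (ξ (i + 1) : ℝ) / T (i + 1))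
      = (ξ 1 : ℝ) / T 1 - (ξ N : ℝ) / T N := by
    rw [show Finset.Icc 1 (N - 1) = Finset.Ico 1 N from by
      rw [← Finset.Ico_add_one_right_eq_Icc]; congr 1; omega]
    rw [Finset.sum_Ico_eq_sum_range]
    have h := Finset.sum_range_sub' (fun k => (ξ (1 + k) : ℝ) / T (1 + k)) (N - 1)
    simp only [add_assoc]
    rw [h, show 1 + (N - 1) = N from by omega]
  rw [htel]
  -- final algebra
  have hb1 : TL - T 1 = (TL - TR) / (lam * ((N : ℝ) - 1) + 2) := by
    rw [eq_div_iff hD]; exact temp_one N lam TL TR hD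
  have hbN : TR - T N = (TR - TL) / (lam * ((N : ℝ) - 1) + 2) := by
    rw [eq_div_iff hD]; exact temp_last N lam TL TR hD
  rw [hb1, hbN, hadef]
  field_simp
  ring

lemma sum_range_split (N : ℕ) (hN : 1 ≤ N) (ξ : ℕ → ℕ) :
    ∑ i ∈ Finset.range (N + 2), ξ i = ξ 0 + (∑ i ∈ Finset.Icc 1 N, ξ i) + ξ (N + 1) := by
  rw [Finset.sum_range_succ, Finset.sum_range_succ']
  congr 1
  rw [add_comm]
  congr 1
  rw [show Finset.Icc 1 N = Finset.Ico 1 (N + 1) from by rw [Finset.Ico_add_one_right_eq_Icc],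
    Finset.sum_Ico_eq_sum_range]
  simp only [Nat.add_sub_cancel]
  exact Finset.sum_congr rfl fun i _ => by rw [add_comm]

lemma dualGen_master (N : ℕ) (hN : 2 ≤ N) (TL TR : ℝ) (hTL : 0 < TL) (hTR : 0 < TR)
    (lam : ℝ) (h0 : 0 < lam) (h1 : lam ≤ 1) (h2 : lam * (4 * N) ≤ 1) (ξ : ℕ → ℕ) :
    |dualGen N lam (psiLam N lam TL TR) ξ| ≤
      ((TL + TR + 1) ^ (∑ i ∈ Finset.range (N + 2), ξ i) *
        ((N : ℝ) * (((∑ i ∈ Finset.range (N + 2), ξ i : ℕ) : ℝ) ^ 2 * (TR - TL) ^ 2 *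
          (2 * ((N : ℝ) + 1) / (TL + TR)) ^ 2))) * lam ^ 2 := by
  set K : ℕ := ∑ i ∈ Finset.range (N + 2), ξ i with hKdef
  obtain ⟨hD2, hDN⟩ := den_bounds N hN lam h0 h1
  have hDpos : (0 : ℝ) < lam * ((N : ℝ) - 1) + 2 := by linarith
  set m : ℝ := (TL + TR) / (2 * ((N : ℝ) + 1)) with hmdef
  have hmpos : 0 < m := by positivity
  have hTlo : ∀ i, 1 ≤ i → i ≤ N → m ≤ tempProfile N lam TL TR i := fun i a b =>
    (temp_bounds N hN TL TR hTL hTR lam h0 h1 h2 i a b).1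
  have hThi : ∀ i, 1 ≤ i → i ≤ N → tempProfile N lam TL TR i ≤ TL + TR := fun i a b =>
    (temp_bounds N hN TL TR hTL hTR lam h0 h1 h2 i a b).2
  have hTpos : ∀ i, 1 ≤ i → i ≤ N → 0 < tempProfile N lam TL TR i := fun i a b =>
    lt_of_lt_of_le hmpos (hTlo i a b)
  rw [dualGen_identity N hN TL TR lam (ne_of_gt hDpos)
    (fun i a b => ne_of_gt (hTpos i a b)) ξ, abs_mul]
  -- ψ bounds
  have hψ0 : 0 ≤ psiLam N lam TL TR ξ := by
    rw [psiLam]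
    apply mul_nonneg (mul_nonneg (pow_nonneg hTL.le _) (pow_nonneg hTR.le _))
    exact Finset.prod_nonneg fun i hi => pow_nonneg
      (by rw [Finset.mem_Icc] at hi; exact (hTpos i hi.1 hi.2).le) _
  have hψle : psiLam N lam TL TR ξ ≤ (TL + TR + 1) ^ K := by
    have hKsplit : K = ξ 0 + (∑ i ∈ Finset.Icc 1 N, ξ i) + ξ (N + 1) :=
      sum_range_split N (by omega) ξ
    rw [psiLam, hKsplit, pow_add, pow_add]
    have hbase : (0 : ℝ) ≤ TL + TR + 1 := by linarith
    have hp1 : TL ^ ξ 0 ≤ (TL + TR + 1) ^ ξ 0 :=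
      pow_le_pow_left₀ hTL.le (by linarith) _
    have hp2 : TR ^ ξ (N + 1) ≤ (TL + TR + 1) ^ ξ (N + 1) :=
      pow_le_pow_left₀ hTR.le (by linarith) _
    have hp3 : (∏ i ∈ Finset.Icc 1 N, tempProfile N lam TL TR i ^ ξ i)
        ≤ ∏ i ∈ Finset.Icc 1 N, (TL + TR + 1) ^ ξ i := by
      apply Finset.prod_le_prod
      · intro i hi
        rw [Finset.mem_Icc] at hi
        exact pow_nonneg (hTpos i hi.1 hi.2).le _
      · intro i hi
        rw [Finset.mem_Icc] at hi
        exact pow_le_pow_left₀ (hTpos i hi.1 hi.2).le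
          (by linarith [hThi i hi.1 hi.2]) _
    calc TL ^ ξ 0 * TR ^ ξ (N + 1) * ∏ i ∈ Finset.Icc 1 N, tempProfile N lam TL TR i ^ ξ i
        ≤ (TL + TR + 1) ^ ξ 0 * (TL + TR + 1) ^ ξ (N + 1) *
            ∏ i ∈ Finset.Icc 1 N, (TL + TR + 1) ^ ξ i := by
          apply mul_le_mul (mul_le_mul hp1 hp2 (pow_nonneg hTR.le _) (pow_nonneg hbase _))
            hp3 (Finset.prod_nonneg fun i hi => pow_nonneg
              (by rw [Finset.mem_Icc] at hi; exact (hTpos i hi.1 hi.2).le) _)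
            (mul_nonneg (pow_nonneg hbase _) (pow_nonneg hbase _))
      _ = (TL + TR + 1) ^ ξ 0 * ((TL + TR + 1) ^ ∑ i ∈ Finset.Icc 1 N, ξ i) *
            (TL + TR + 1) ^ ξ (N + 1) := by
          rw [Finset.prod_pow_eq_pow_sum]; ring
  -- sum bound
  set S : ℝ := ∑ i ∈ Finset.Icc 1 (N - 1),
      4 * (ξ i : ℝ) * (ξ (i + 1) : ℝ) *
        (lam * (TR - TL) / (lam * ((N : ℝ) - 1) + 2)) ^ 2 /
          (tempProfile N lam TL TR i * tempProfile N lam TL TR (i + 1)) with hSdef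
  have hterm_nonneg : ∀ i ∈ Finset.Icc 1 (N - 1),
      0 ≤ 4 * (ξ i : ℝ) * (ξ (i + 1) : ℝ) *
        (lam * (TR - TL) / (lam * ((N : ℝ) - 1) + 2)) ^ 2 /
          (tempProfile N lam TL TR i * tempProfile N lam TL TR (i + 1)) := by
    intro i hi
    rw [Finset.mem_Icc] at hi
    have := hTpos i hi.1 (by omega)
    have := hTpos (i + 1) (by omega) (by omega)
    positivity
  have hS0 : 0 ≤ S := Finset.sum_nonneg hterm_nonneg
  have hξK : ∀ i, i ≤ N + 1 → (ξ i : ℝ) ≤ (K : ℝ) := by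
    intro i hi
    exact_mod_cast Nat.cast_le.2 (Finset.single_le_sum (f := ξ)
      (fun _ _ => Nat.zero_le _) (Finset.mem_range.2 (by omega)))
  have hterm_le : ∀ i ∈ Finset.Icc 1 (N - 1),
      4 * (ξ i : ℝ) * (ξ (i + 1) : ℝ) *
        (lam * (TR - TL) / (lam * ((N : ℝ) - 1) + 2)) ^ 2 /
          (tempProfile N lam TL TR i * tempProfile N lam TL TR (i + 1))
      ≤ (K : ℝ) ^ 2 * (TR - TL) ^ 2 * (2 * ((N : ℝ) + 1) / (TL + TR)) ^ 2 * lam ^ 2 := by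
    intro i hi
    rw [Finset.mem_Icc] at hi
    have hTi := hTpos i hi.1 (by omega)
    have hTi1 := hTpos (i + 1) (by omega) (by omega)
    have hloi := hTlo i hi.1 (by omega)
    have hloi1 := hTlo (i + 1) (by omega) (by omega)
    have hKi := hξK i (by omega)
    have hKi1 := hξK (i + 1) (by omega)
    have hD4 : (4 : ℝ) ≤ (lam * ((N : ℝ) - 1) + 2) ^ 2 := by nlinarith
    have ha2 : (lam * (TR - TL) / (lam * ((N : ℝ) - 1) + 2)) ^ 2
        ≤ lam ^ 2 * (TR - TL) ^ 2 / 4 := by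
      rw [div_pow, mul_pow]
      exact div_le_div_of_nonneg_left (by positivity) (by norm_num) hD4
    have ha0 : 0 ≤ (lam * (TR - TL) / (lam * ((N : ℝ) - 1) + 2)) ^ 2 := sq_nonneg _
    calc 4 * (ξ i : ℝ) * (ξ (i + 1) : ℝ) *
          (lam * (TR - TL) / (lam * ((N : ℝ) - 1) + 2)) ^ 2 /
            (tempProfile N lam TL TR i * tempProfile N lam TL TR (i + 1))
        ≤ 4 * (K : ℝ) ^ 2 * (lam ^ 2 * (TR - TL) ^ 2 / 4) / (m * m) := by
          apply div_le_div₀ (by positivity) ?_ (by positivity) ?_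
          · have hx0 : (0 : ℝ) ≤ (ξ i : ℝ) := Nat.cast_nonneg _
            have hx1 : (0 : ℝ) ≤ (ξ (i + 1) : ℝ) := Nat.cast_nonneg _
            have hK0 : (0 : ℝ) ≤ (K : ℝ) := Nat.cast_nonneg _
            nlinarith [mul_le_mul hKi hKi1 hx1 hK0, sq_nonneg lam, sq_nonneg (TR - TL)]
          · exact mul_le_mul hloi hloi1 hmpos.le hTi.le
      _ = (K : ℝ) ^ 2 * (TR - TL) ^ 2 * (2 * ((N : ℝ) + 1) / (TL + TR)) ^ 2 * lam ^ 2 := by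
          rw [hmdef]
          have hs : TL + TR ≠ 0 := by positivity
          have hn : ((N : ℝ) + 1) ≠ 0 := by positivity
          field_simp
  have hconst0 : 0 ≤ (K : ℝ) ^ 2 * (TR - TL) ^ 2 * (2 * ((N : ℝ) + 1) / (TL + TR)) ^ 2 * lam ^ 2 := by
    positivity
  have hS1 : S ≤ (N : ℝ) * ((K : ℝ) ^ 2 * (TR - TL) ^ 2 *
      (2 * ((N : ℝ) + 1) / (TL + TR)) ^ 2 * lam ^ 2) := by
    calc S ≤ ∑ _i ∈ Finset.Icc 1 (N - 1),
          (K : ℝ) ^ 2 * (TR - TL) ^ 2 * (2 * ((N : ℝ) + 1) / (TL + TR)) ^ 2 * lam ^ 2 :=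
        Finset.sum_le_sum hterm_le
      _ = ((N - 1 : ℕ) : ℝ) * ((K : ℝ) ^ 2 * (TR - TL) ^ 2 *
          (2 * ((N : ℝ) + 1) / (TL + TR)) ^ 2 * lam ^ 2) := by
        rw [Finset.sum_const, Nat.card_Icc, nsmul_eq_mul]
        norm_num
      _ ≤ (N : ℝ) * ((K : ℝ) ^ 2 * (TR - TL) ^ 2 *
          (2 * ((N : ℝ) + 1) / (TL + TR)) ^ 2 * lam ^ 2) := by
        apply mul_le_mul_of_nonneg_right _ hconst0
        exact_mod_cast Nat.cast_le.2 (by omega : N - 1 ≤ N)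
  rw [abs_of_nonneg hψ0, abs_of_nonneg hS0]
  calc psiLam N lam TL TR ξ * S
      ≤ (TL + TR + 1) ^ K * ((N : ℝ) * ((K : ℝ) ^ 2 * (TR - TL) ^ 2 *
          (2 * ((N : ℝ) + 1) / (TL + TR)) ^ 2 * lam ^ 2)) :=
        mul_le_mul hψle hS1 hS0 (pow_nonneg (by linarith) _)
    _ = ((TL + TR + 1) ^ K * ((N : ℝ) * ((K : ℝ) ^ 2 * (TR - TL) ^ 2 *
          (2 * ((N : ℝ) + 1) / (TL + TR)) ^ 2))) * lam ^ 2 := by ring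

/-- `|(L_d ψ_λ)(ξ)| ≤ A(ξ)·λ²` for all small `λ > 0`; consequently the bound is
uniform over configurations with a fixed total number `K` of particles. -/
theorem dual_generator_local_equilibrium_lambda_sq_bound
    (N : ℕ) (hN : 2 ≤ N) (TL TR : ℝ) (hTL : 0 < TL) (hTR : 0 < TR) :
    ∃ lam₀ > (0 : ℝ),
      (∀ ξ : ℕ → ℕ, ∃ A > (0 : ℝ), ∀ lam : ℝ, 0 < lam → lam ≤ lam₀ →
        |dualGen N lam (psiLam N lam TL TR) ξ| ≤ A * lam ^ 2) ∧
      (∀ K : ℕ, ∃ C > (0 : ℝ), ∀ ξ : ℕ → ℕ,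
        (∑ i ∈ Finset.range (N + 2), ξ i) = K →
        ∀ lam : ℝ, 0 < lam → lam ≤ lam₀ →
          |dualGen N lam (psiLam N lam TL TR) ξ| ≤ C * lam ^ 2) := by
  have hNpos : (0 : ℝ) < (N : ℝ) := by
    have : (2 : ℝ) ≤ (N : ℝ) := by exact_mod_cast hN
    linarith
  refine ⟨min 1 (1 / (4 * (N : ℝ))), lt_min one_pos (by positivity), ?_, ?_⟩
  · intro ξ
    set K : ℕ := ∑ i ∈ Finset.range (N + 2), ξ i with hKdef
    set c : ℝ := (TL + TR + 1) ^ K * ((N : ℝ) * ((K : ℝ) ^ 2 * (TR - TL) ^ 2 *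
      (2 * ((N : ℝ) + 1) / (TL + TR)) ^ 2)) with hcdef
    have hc0 : 0 ≤ c := mul_nonneg (pow_nonneg (by linarith) _) (by positivity)
    refine ⟨c + 1, by linarith, ?_⟩
    intro lam h0 hle
    have h1 : lam ≤ 1 := le_trans hle (min_le_left _ _)
    have h2 : lam * (4 * N) ≤ 1 := by
      have := le_trans hle (min_le_right _ _)
      rw [le_div_iff₀ (by positivity)] at this
      linarith
    have hm := dualGen_master N hN TL TR hTL hTR lam h0 h1 h2 ξ
    have : c * lam ^ 2 ≤ (c + 1) * lam ^ 2 := by nlinarith [sq_nonneg lam]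
    calc |dualGen N lam (psiLam N lam TL TR) ξ| ≤ c * lam ^ 2 := hm
      _ ≤ (c + 1) * lam ^ 2 := this
  · intro K
    set c : ℝ := (TL + TR + 1) ^ K * ((N : ℝ) * ((K : ℝ) ^ 2 * (TR - TL) ^ 2 *
      (2 * ((N : ℝ) + 1) / (TL + TR)) ^ 2)) with hcdef
    have hc0 : 0 ≤ c := mul_nonneg (pow_nonneg (by linarith) _) (by positivity)
    refine ⟨c + 1, by linarith, ?_⟩
    intro ξ hK lam h0 hle
    have h1 : lam ≤ 1 := le_trans hle (min_le_left _ _)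
    have h2 : lam * (4 * N) ≤ 1 := by
      have := le_trans hle (min_le_right _ _)
      rw [le_div_iff₀ (by positivity)] at this
      linarith
    have hm := dualGen_master N hN TL TR hTL hTR lam h0 h1 h2 ξ
    rw [hK] at hm
    have : c * lam ^ 2 ≤ (c + 1) * lam ^ 2 := by nlinarith [sq_nonneg lam]
    calc |dualGen N lam (psiLam N lam TL TR) ξ| ≤ c * lam ^ 2 := hm
      _ ≤ (c + 1) * lam ^ 2 := this
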